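/- Let M be a finite matroid on ground set E and let C ⊆ E be a circuit of M (a minimal dependent set) with at least two elements. Then there exist bases s and t of M and elements a, b ∈ E with a ≠ b, a ∉ t, b ∈ t, s = (t \ {b}) ∪ {a}, and C ⊆ s ∪ t; moreover, C is the unique circuit of M contained in s ∪ t. -/

import Mathlib

variable {α : Type*}

/-- A circuit of a matroid: a minimal dependent set. -/
def IsCircuit (M : Matroid α) (C : Set α) : Prop :=
  M.Dep C ∧ ∀ D : Set α, D ⊂ C → M.Indep D

open Set

lemma IsCircuit.indep_diff {M : Matroid α} {C : Set α} (hC : IsCircuit M C) {x : α}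
    (hx : x ∈ C) : M.Indep (C \ {x}) :=
  hC.2 _ (sdiff_singleton_ssubset.2 hx)

lemma IsCircuit.mem_closure_diff {M : Matroid α} {C : Set α} (hC : IsCircuit M C) {x : α}
    (hx : x ∈ C) : x ∈ M.closure (C \ {x}) := by
  have hind := hC.indep_diff hx
  have hdep : M.Dep (insert x (C \ {x})) := by
    rw [insert_diff_singleton, insert_eq_of_mem hx]; exact hC.1
  exact ((hind.insert_dep_iff).1 hdep).1

/-- Any circuit containing `a` inside `insert a t` for a base `t` equals a canonical set. -/
lemma circuit_eq_canonical {M : Matroid α} {t : Set α} (ht : M.IsBase t) {a : α} (hat : a ∉ t)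
    {D : Set α} (hD : IsCircuit M D) (haD : a ∈ D) (hDt : D ⊆ insert a t) :
    D = insert a {x ∈ t | a ∉ M.closure (t \ {x})} := by
  ext y
  constructor
  · intro hy
    rcases eq_or_ne y a with rfl | hya
    · exact mem_insert _ _
    have hyt : y ∈ t := (hDt hy).resolve_left hya
    refine mem_insert_of_mem _ ⟨hyt, fun hacl => ?_⟩
    have h1 : y ∈ M.closure (D \ {y}) := hD.mem_closure_diff hy
    have h2 : D \ {y} ⊆ insert a (t \ {y}) := by
      intro z hz
      rcases hDt hz.1 with rfl | hzt
      · exact mem_insert _ _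
      · exact mem_insert_of_mem _ ⟨hzt, hz.2⟩
    have h3 : y ∈ M.closure (insert a (t \ {y})) :=
      M.closure_subset_closure h2 h1
    rw [Matroid.closure_insert_eq_of_mem_closure hacl] at h3
    exact ht.indep.notMem_closure_sdiff_of_mem hyt h3
  · rintro (rfl | ⟨hyt, hycl⟩)
    · exact haD
    by_contra hyD
    have h2 : D \ {a} ⊆ t \ {y} := by
      intro z hz
      exact ⟨(hDt hz.1).resolve_left hz.2, fun h => hyD (h ▸ hz.1)⟩
    exact hycl (M.closure_subset_closure h2 (hD.mem_closure_diff haD))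

/-- Every circuit `C` of a finite matroid with at least two elements is the unique
circuit contained in the union `s ∪ t` of two adjacent bases `s = (t \ {b}) ∪ {a}`. -/
theorem circuit_eq_fundamental_circuit_of_ridge (M : Matroid α) [M.Finite]
    (C : Set α) (hC : IsCircuit M C) (hcard : 2 ≤ C.ncard) :
    ∃ s t : Set α, ∃ a b : α, M.IsBase s ∧ M.IsBase t ∧ a ≠ b ∧ a ∉ t ∧ b ∈ t ∧
      s = insert a (t \ {b}) ∧ C ⊆ s ∪ t ∧
      ∀ C' : Set α, C' ⊆ s ∪ t → IsCircuit M C' → C' = C := by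
  have hCE : C ⊆ M.E := hC.1.subset_ground
  have hfin : C.Finite := M.set_finite C hCE
  obtain ⟨a, b, haC, hbC, hab⟩ := (one_lt_ncard_iff hfin).1 (by omega)
  have hInd : M.Indep (C \ {a}) := hC.indep_diff haC
  obtain ⟨t, ht, hCt⟩ := hInd.exists_isBase_superset
  have hat : a ∉ t := by
    intro h
    refine hC.1.not_indep (ht.indep.subset fun x hx => ?_)
    rcases eq_or_ne x a with rfl | hxa
    · exact h
    · exact hCt ⟨hx, hxa⟩
  have hbt : b ∈ t := hCt ⟨hbC, hab.symm⟩
  have hCsub : C ⊆ insert a t := by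
    intro x hx
    rcases eq_or_ne x a with rfl | hxa
    · exact mem_insert _ _
    · exact mem_insert_of_mem _ (hCt ⟨hx, hxa⟩)
  have hCeq := circuit_eq_canonical ht hat hC haC hCsub
  have hbS : a ∉ M.closure (t \ {b}) := by
    have : b ∈ insert a {x ∈ t | a ∉ M.closure (t \ {x})} := hCeq ▸ hbC
    exact (this.resolve_left hab.symm).2
  have hsInd : M.Indep (insert a (t \ {b})) := by
    rw [(ht.indep.subset diff_subset).insert_indep_iff_of_notMem
      (fun h => hat h.1)]
    exact ⟨hCE haC, hbS⟩
  have hs : M.IsBase (insert a (t \ {b})) := by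
    have := ht.exchange_isBase_of_indep' hbt hat
      (by rwa [← insert_diff_singleton_comm hab])
    rwa [← insert_diff_singleton_comm hab] at this
  have hun : insert a (t \ {b}) ∪ t = insert a t := by
    rw [insert_union, union_eq_self_of_subset_left diff_subset]
  refine ⟨insert a (t \ {b}), t, a, b, hs, ht, ?_, hat, hbt, rfl, ?_, ?_⟩
  · rintro rfl; exact hat hbt
  · rw [hun]; exact hCsub
  · intro C' hC't hcirc
    rw [hun] at hC't
    have haC' : a ∈ C' := by
      by_contra h
      refine hcirc.1.not_indep (ht.indep.subset fun x hx => ?_)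
      exact (hC't hx).resolve_left (fun hxa => h (hxa ▸ hx))
    rw [circuit_eq_canonical ht hat hcirc haC' hC't, ← hCeq]
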